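/- arXiv:2602.15764 — 3 statements merged into one kernel-verified Lean document; each statement's English description precedes it below -/
import Mathlib

section
/- Fix M > 0 and Λ > 0 with 9ΛM² < 1, and fix a sign σ ∈ {+1, −1}. Then there exist ε > 0 and continuously differentiable functions r, Ω : (−ε, ε) → ℝ with r(0) = 3M and Ω(0) = σ·Ω_ph(M), such that for all a with |a| < ε one has Φ(r(a), Ω(a), a) = 0 and (∂_r Φ)(r(a), Ω(a), a) = 0. -/
/-- The Kerr–de Sitter horizon function `Δ_r(r) = (r² + a²)(1 - Λr²/3) - 2Mr`. -/
noncomputable def Δr (M Λ a r : ℝ) : ℝ :=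
  (r ^ 2 + a ^ 2) * (1 - Λ * r ^ 2 / 3) - 2 * M * r

/-- `Ξ = 1 + Λa²/3`. -/
noncomputable def Ξ (Λ a : ℝ) : ℝ := 1 + Λ * a ^ 2 / 3

/-- Equatorial metric coefficient `g_tt(r, a) = (-Δ_r(r) + a²)/r²`. -/
noncomputable def gtt (M Λ r a : ℝ) : ℝ := (-(Δr M Λ a r) + a ^ 2) / r ^ 2

/-- Equatorial metric coefficient `g_tφ(r, a) = a(Δ_r(r) - (r² + a²))/(r²Ξ)`. -/
noncomputable def gtφ (M Λ r a : ℝ) : ℝ :=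
  a * (Δr M Λ a r - (r ^ 2 + a ^ 2)) / (r ^ 2 * Ξ Λ a)

/-- Equatorial metric coefficient `g_φφ(r, a) = ((r² + a²)² - a²Δ_r(r))/(r²Ξ²)`. -/
noncomputable def gφφ (M Λ r a : ℝ) : ℝ :=
  ((r ^ 2 + a ^ 2) ^ 2 - a ^ 2 * Δr M Λ a r) / (r ^ 2 * (Ξ Λ a) ^ 2)

/-- The equatorial null condition `Φ(r, Ω, a) = g_tt + 2Ω·g_tφ + Ω²·g_φφ`. -/
noncomputable def Φeq (M Λ r Ω a : ℝ) : ℝ :=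
  gtt M Λ r a + 2 * Ω * gtφ M Λ r a + Ω ^ 2 * gφφ M Λ r a

/-- The photon-sphere angular velocity `Ω_ph(M) = √(1 - 9ΛM²)/(3√3·M)`. -/
noncomputable def Ωph (M Λ : ℝ) : ℝ :=
  Real.sqrt (1 - 9 * Λ * M ^ 2) / (3 * Real.sqrt 3 * M)


/- auxiliary -/
noncomputable def Δr' (M Λ a r : ℝ) : ℝ :=
  2*r*(1 - Λ*r^2/3) - (r^2+a^2)*(2*Λ*r/3) - 2*M
noncomputable def Pf (M Λ a Ω r : ℝ) : ℝ :=
  (Ξ Λ a)^2 * (-(Δr M Λ a r) + a^2) + 2*Ω*(Ξ Λ a)*a*(Δr M Λ a r - (r^2+a^2))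
    + Ω^2*((r^2+a^2)^2 - a^2*(Δr M Λ a r))
noncomputable def Qf (M Λ a Ω r : ℝ) : ℝ :=
  (Ξ Λ a)^2 * (-(Δr' M Λ a r)) + 2*Ω*(Ξ Λ a)*a*((Δr' M Λ a r) - 2*r)
    + Ω^2*(4*r*(r^2+a^2) - a^2*(Δr' M Λ a r))
noncomputable def Ωf (M Λ σ : ℝ) (p : ℝ × ℝ) : ℝ :=
  (Ξ Λ p.2) * (p.2*((p.1^2+p.2^2) - Δr M Λ p.2 p.1) + σ*p.1^2*Real.sqrt (Δr M Λ p.2 p.1))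
    / ((p.1^2+p.2^2)^2 - p.2^2*(Δr M Λ p.2 p.1))
noncomputable def Hf (M Λ σ : ℝ) (p : ℝ × ℝ) : ℝ := Qf M Λ p.2 (Ωf M Λ σ p) p.1

lemma hasDerivAt_Δr (M Λ a r : ℝ) : HasDerivAt (fun ρ => Δr M Λ a ρ) (Δr' M Λ a r) r := by
  have h1 : HasDerivAt (fun ρ : ℝ => ρ ^ 2 + a ^ 2) (2*r) r := by
    simpa using ((hasDerivAt_pow 2 r).add_const (a^2))
  have h2 : HasDerivAt (fun ρ : ℝ => 1 - Λ * ρ ^ 2 / 3) (-(Λ * (2*r) / 3)) r := by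
    have := ((hasDerivAt_pow 2 r).const_mul Λ).div_const 3
    simpa using (this.const_sub 1)
  have h3 : HasDerivAt (fun ρ : ℝ => 2 * M * ρ) (2*M) r := by
    simpa using (hasDerivAt_id r).const_mul (2*M)
  have h := (h1.mul h2).sub h3
  have hval : Δr' M Λ a r
      = (2*r) * (1 - Λ * r ^ 2 / 3) + (r ^ 2 + a ^ 2) * (-(Λ * (2*r) / 3)) - 2 * M := by
    unfold Δr'; ring
  rw [hval]
  exact h

lemma hasDerivAt_Pf (M Λ a Ω r : ℝ) :
    HasDerivAt (fun ρ => Pf M Λ a Ω ρ) (Qf M Λ a Ω r) r := by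
  have hd := hasDerivAt_Δr M Λ a r
  have h1 : HasDerivAt (fun ρ : ℝ => (Ξ Λ a)^2 * (-(Δr M Λ a ρ) + a^2))
      ((Ξ Λ a)^2 * (-(Δr' M Λ a r))) r := by
    simpa using ((hd.neg.add_const (a^2)).const_mul ((Ξ Λ a)^2))
  have h2 : HasDerivAt (fun ρ : ℝ => 2*Ω*(Ξ Λ a)*a*(Δr M Λ a ρ - (ρ^2+a^2)))
      (2*Ω*(Ξ Λ a)*a*((Δr' M Λ a r) - 2*r)) r := by
    have hsq : HasDerivAt (fun ρ : ℝ => ρ ^ 2 + a ^ 2) (2*r) r := by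
      simpa using ((hasDerivAt_pow 2 r).add_const (a^2))
    simpa using ((hd.sub hsq).const_mul (2*Ω*(Ξ Λ a)*a))
  have h3 : HasDerivAt (fun ρ : ℝ => Ω^2*((ρ^2+a^2)^2 - a^2*(Δr M Λ a ρ)))
      (Ω^2*(4*r*(r^2+a^2) - a^2*(Δr' M Λ a r))) r := by
    have hsq : HasDerivAt (fun ρ : ℝ => ρ ^ 2 + a ^ 2) (2*r) r := by
      simpa using ((hasDerivAt_pow 2 r).add_const (a^2))
    have hsq2 : HasDerivAt (fun ρ : ℝ => (ρ ^ 2 + a ^ 2)^2) (2*(r^2+a^2)*(2*r)) r := by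
      simpa using (hsq.fun_pow 2)
    have := (hsq2.sub (hd.const_mul (a^2))).const_mul (Ω^2)
    refine this.congr_deriv ?_
    ring
  have h := (h1.add h2).add h3
  have hval : Qf M Λ a Ω r = (Ξ Λ a)^2 * (-(Δr' M Λ a r)) + 2*Ω*(Ξ Λ a)*a*((Δr' M Λ a r) - 2*r)
      + Ω^2*(4*r*(r^2+a^2) - a^2*(Δr' M Λ a r)) := rfl
  rw [hval]; exact h

lemma Φeq_eq (M Λ r Ω a : ℝ) (hr : r ≠ 0) (hΞ : Ξ Λ a ≠ 0) :
    Φeq M Λ r Ω a = Pf M Λ a Ω r / (r^2 * (Ξ Λ a)^2) := by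
  unfold Φeq gtt gtφ gφφ Pf
  field_simp

lemma Pf_root (M Λ σ : ℝ) (p : ℝ × ℝ) (hD : 0 ≤ Δr M Λ p.2 p.1)
    (hE : (p.1^2+p.2^2)^2 - p.2^2*(Δr M Λ p.2 p.1) ≠ 0) (hσ : σ^2 = 1) :
    Pf M Λ p.2 (Ωf M Λ σ p) p.1 = 0 := by
  obtain ⟨r, a⟩ := p
  simp only at *
  have hs2 : (Real.sqrt (Δr M Λ a r))^2 = Δr M Λ a r := Real.sq_sqrt hD
  have h1 : Pf M Λ a (Ωf M Λ σ (r,a)) r * ((r^2+a^2)^2 - a^2*(Δr M Λ a r))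
      = (Ξ Λ a)^2 * r^4 * (σ^2 * (Real.sqrt (Δr M Λ a r))^2 - Δr M Λ a r) := by
    unfold Pf Ωf
    simp only
    generalize Δr M Λ a r = D at hE ⊢
    rw [mul_comm (a^2) D] at hE
    field_simp
    ring
  have h2 : (Ξ Λ a)^2 * r^4 * (σ^2 * (Real.sqrt (Δr M Λ a r))^2 - Δr M Λ a r) = 0 := by
    rw [hs2, hσ]; ring
  rw [h2] at h1
  exact (mul_eq_zero.mp h1).resolve_right hE

lemma Hf_at_zero (M Λ σ r : ℝ) (hr : r ≠ 0) (hD : 0 ≤ Δr M Λ 0 r) (hσ : σ^2 = 1) :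
    Hf M Λ σ (r, 0) = 4 * Δr M Λ 0 r / r - Δr' M Λ 0 r := by
  have hs2 : (Real.sqrt (Δr M Λ 0 r))^2 = Δr M Λ 0 r := Real.sq_sqrt hD
  unfold Hf Qf Ωf Ξ
  simp only
  generalize Δr M Λ 0 r = D at hs2 ⊢
  generalize Δr' M Λ 0 r = D'
  rw [← hs2]
  field_simp
  have ht : Real.sqrt ((Real.sqrt D)^2) ^ 2 = (Real.sqrt D)^2 := Real.sq_sqrt (sq_nonneg _)
  linear_combination (36 * r^8 * (Real.sqrt D)^2) * hσ + (36 * r^8 * σ^2) * ht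

lemma Δr_3M (M Λ : ℝ) : Δr M Λ 0 (3*M) = 3*M^2*(1 - 9*Λ*M^2) := by
  unfold Δr; ring

lemma Hf_zero_pt (M Λ σ : ℝ) (hM : 0 < M) (hsub : 9 * Λ * M ^ 2 < 1) (hσ : σ^2 = 1) :
    Hf M Λ σ (3*M, 0) = 0 := by
  have hD : 0 ≤ Δr M Λ 0 (3*M) := by
    rw [Δr_3M]; nlinarith
  rw [Hf_at_zero M Λ σ (3*M) (by positivity) hD hσ]
  rw [Δr_3M]
  unfold Δr'
  field_simp
  ring

lemma hasDerivAt_Hzero (M Λ σ : ℝ) (hM : 0 < M) :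
    HasDerivAt (fun ρ => 4 * Δr M Λ 0 ρ / ρ - Δr' M Λ 0 ρ) 2 (3*M) := by
  have h3 : (3*M) ≠ 0 := by positivity
  have hd1 : HasDerivAt (fun ρ => 4 * Δr M Λ 0 ρ) (4 * Δr' M Λ 0 (3*M)) (3*M) :=
    (hasDerivAt_Δr M Λ 0 (3*M)).const_mul 4
  have hq : HasDerivAt (fun ρ => 4 * Δr M Λ 0 ρ / ρ)
      ((4 * Δr' M Λ 0 (3*M) * (3*M) - 4 * Δr M Λ 0 (3*M) * 1) / (3*M)^2) (3*M) :=
    hd1.div (hasDerivAt_id (3*M)) h3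
  have hd2 : HasDerivAt (fun ρ => Δr' M Λ 0 ρ) (2 - 4*Λ*(3*M)^2) (3*M) := by
    have hfun : (fun ρ : ℝ => Δr' M Λ 0 ρ) = fun ρ : ℝ => 2*ρ - (4*Λ/3)*ρ^3 - 2*M := by
      funext ρ; unfold Δr'; ring
    rw [hfun]
    have h1 : HasDerivAt (fun ρ : ℝ => 2*ρ) 2 (3*M) := by
      simpa using (hasDerivAt_id (3*M)).const_mul 2
    have h2 : HasDerivAt (fun ρ : ℝ => (4*Λ/3)*ρ^3) ((4*Λ/3)*(3*(3*M)^2)) (3*M) := by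
      simpa using (hasDerivAt_pow 3 (3*M)).const_mul (4*Λ/3)
    have := (h1.sub h2).sub_const (2*M)
    refine this.congr_deriv ?_
    ring
  have := hq.sub hd2
  refine this.congr_deriv ?_
  unfold Δr Δr'
  field_simp
  ring

lemma Ωf_zero_pt (M Λ σ : ℝ) (hM : 0 < M) (hsub : 9 * Λ * M ^ 2 < 1) :
    Ωf M Λ σ (3*M, 0) = σ * Ωph M Λ := by
  have hx : (0:ℝ) ≤ 1 - 9*Λ*M^2 := by nlinarith
  have e1 : Real.sqrt (Δr M Λ 0 (3*M)) = (Real.sqrt 3 * M) * Real.sqrt (1-9*Λ*M^2) := by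
    rw [Δr_3M]
    rw [show (3:ℝ)*M^2*(1-9*Λ*M^2) = (Real.sqrt 3 * M)^2 * (1-9*Λ*M^2) by
      rw [mul_pow, Real.sq_sqrt (by norm_num : (0:ℝ) ≤ 3)]]
    rw [Real.sqrt_mul (by positivity), Real.sqrt_sq (by positivity)]
  unfold Ωf Ωph Ξ
  simp only [e1]
  have h3 : Real.sqrt 3 * Real.sqrt 3 = 3 := Real.mul_self_sqrt (by norm_num)
  have hs3 : Real.sqrt 3 > 0 := by positivity
  field_simp
  have hA : Real.sqrt (1 - Λ*M^2*9) = Real.sqrt (1 - 9*Λ*M^2) := by ring_nf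
  linear_combination (σ * 27 * M^4 * Real.sqrt (1-9*Λ*M^2)) * h3 + (27*M^4*σ*(Real.sqrt 3^2 - 3)) * hA

lemma contDiffAt_Ωf (M Λ σ : ℝ) (p : ℝ × ℝ) (hD : Δr M Λ p.2 p.1 ≠ 0)
    (hE : (p.1^2+p.2^2)^2 - p.2^2*(Δr M Λ p.2 p.1) ≠ 0) :
    ContDiffAt ℝ 1 (Ωf M Λ σ) p := by
  have hΔ : ContDiff ℝ 1 (fun q : ℝ × ℝ => Δr M Λ q.2 q.1) := by
    unfold Δr; fun_prop (disch := norm_num)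
  have hs : ContDiffAt ℝ 1 (fun q : ℝ × ℝ => Real.sqrt (Δr M Λ q.2 q.1)) p :=
    (Real.contDiffAt_sqrt hD).comp p hΔ.contDiffAt
  unfold Ωf Ξ
  apply ContDiffAt.div
  · fun_prop (disch := norm_num)
  · fun_prop (disch := norm_num)
  · exact hE

lemma contDiffAt_Hf (M Λ σ : ℝ) (p : ℝ × ℝ) (hD : Δr M Λ p.2 p.1 ≠ 0)
    (hE : (p.1^2+p.2^2)^2 - p.2^2*(Δr M Λ p.2 p.1) ≠ 0) :
    ContDiffAt ℝ 1 (Hf M Λ σ) p := by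
  have hΩ := contDiffAt_Ωf M Λ σ p hD hE
  unfold Hf Qf Δr' Ξ
  fun_prop (disch := norm_num)


/-- For `M > 0`, `Λ > 0` with `9ΛM² < 1` and a sign `σ ∈ {+1, -1}`, there
exist `ε > 0` and continuously differentiable functions `r, Ω : (-ε, ε) → ℝ` with
`r(0) = 3M`, `Ω(0) = σ·Ω_ph(M)`, solving `Φ(r(a), Ω(a), a) = 0` and
`∂_rΦ(r(a), Ω(a), a) = 0` for all `|a| < ε`. -/
theorem stmt_4 (M Λ : ℝ) (hM : 0 < M) (hΛ : 0 < Λ) (hsub : 9 * Λ * M ^ 2 < 1)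
    (σ : ℝ) (hσ : σ = 1 ∨ σ = -1) :
    ∃ ε > 0, ∃ r Ω : ℝ → ℝ,
      ContDiffOn ℝ 1 r (Set.Ioo (-ε) ε) ∧ ContDiffOn ℝ 1 Ω (Set.Ioo (-ε) ε) ∧
      r 0 = 3 * M ∧ Ω 0 = σ * Ωph M Λ ∧
      ∀ a : ℝ, |a| < ε →
        Φeq M Λ (r a) (Ω a) a = 0 ∧
        HasDerivAt (fun ρ => Φeq M Λ ρ (Ω a) a) 0 (r a) := by
  have hσ2 : σ ^ 2 = 1 := by rcases hσ with h | h <;> rw [h] <;> norm_num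
  set pt : ℝ × ℝ := (3 * M, 0) with hpt
  have hDpt : (0:ℝ) < Δr M Λ pt.2 pt.1 := by
    show (0:ℝ) < Δr M Λ 0 (3*M)
    rw [Δr_3M]
    have h1 : (0:ℝ) < 1 - 9*Λ*M^2 := by linarith
    positivity
  have hEpt : (0:ℝ) < (pt.1^2 + pt.2^2)^2 - pt.2^2 * Δr M Λ pt.2 pt.1 := by
    show (0:ℝ) < ((3*M)^2 + 0^2)^2 - 0^2 * Δr M Λ 0 (3*M)
    have : ((3*M)^2 + 0^2)^2 - 0^2 * Δr M Λ 0 (3*M) = 81*M^4 := by ring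
    rw [this]; positivity
  have hHcd : ContDiffAt ℝ 1 (Hf M Λ σ) pt := contDiffAt_Hf M Λ σ pt hDpt.ne' hEpt.ne'
  set G : ℝ × ℝ → ℝ × ℝ := fun p => (Hf M Λ σ p, p.2) with hGdef
  have hG : ContDiffAt ℝ 1 G pt := hHcd.prodMk contDiffAt_snd
  have hdiffH : DifferentiableAt ℝ (Hf M Λ σ) pt := hHcd.differentiableAt one_ne_zero
  set L : ℝ × ℝ →L[ℝ] ℝ := fderiv ℝ (Hf M Λ σ) pt with hLdef
  have hL : HasFDerivAt (Hf M Λ σ) L pt := hdiffH.hasFDerivAt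
  -- L (1,0) = 2
  have hcurve : HasDerivAt (fun ρ : ℝ => ((ρ, 0) : ℝ × ℝ)) ((1,0) : ℝ × ℝ) (3*M) :=
    (hasDerivAt_id (3*M)).prodMk (hasDerivAt_const _ 0)
  have h1 : HasDerivAt (fun ρ : ℝ => Hf M Λ σ (ρ, 0)) (L (1,0)) (3*M) :=
    by have := hL.comp_hasDerivAt (3*M) hcurve; exact this
  have h2 : HasDerivAt (fun ρ : ℝ => Hf M Λ σ (ρ, 0)) 2 (3*M) := by
    have hev : (fun ρ : ℝ => 4 * Δr M Λ 0 ρ / ρ - Δr' M Λ 0 ρ)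
        =ᶠ[nhds (3*M)] (fun ρ : ℝ => Hf M Λ σ (ρ, 0)) := by
      have hcd : Continuous (fun ρ : ℝ => Δr M Λ 0 ρ) := by
        unfold Δr; fun_prop (disch := norm_num)
      have hopen : IsOpen {ρ : ℝ | 0 < ρ ∧ 0 < Δr M Λ 0 ρ} :=
        (isOpen_Ioi.preimage continuous_id).inter (isOpen_Ioi.preimage hcd)
      have hmem : (3*M) ∈ {ρ : ℝ | 0 < ρ ∧ 0 < Δr M Λ 0 ρ} := ⟨by positivity, hDpt⟩
      filter_upwards [hopen.mem_nhds hmem] with ρ hρ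
      exact (Hf_at_zero M Λ σ ρ hρ.1.ne' hρ.2.le hσ2).symm
    exact (hasDerivAt_Hzero M Λ σ hM).congr_of_eventuallyEq hev.symm
  have hL10 : L (1,0) = 2 := h1.unique h2
  set d : ℝ := L (0,1) with hddef
  have hLp : ∀ q : ℝ × ℝ, L q = 2 * q.1 + d * q.2 := by
    intro q
    have hq : (q : ℝ × ℝ) = q.1 • ((1,0) : ℝ × ℝ) + q.2 • ((0,1) : ℝ × ℝ) := by
      ext <;> simp
    conv_lhs => rw [hq]
    rw [map_add, map_smul, map_smul, hL10]
    simp [smul_eq_mul]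
    ring
  -- build the equivalence
  set g1 : ℝ × ℝ →L[ℝ] ℝ :=
    (2:ℝ)⁻¹ • (ContinuousLinearMap.fst ℝ ℝ ℝ - d • ContinuousLinearMap.snd ℝ ℝ ℝ) with hg1
  set f2 : ℝ × ℝ →L[ℝ] ℝ × ℝ := L.prod (ContinuousLinearMap.snd ℝ ℝ ℝ) with hf2
  set g2 : ℝ × ℝ →L[ℝ] ℝ × ℝ := g1.prod (ContinuousLinearMap.snd ℝ ℝ ℝ) with hg2
  have hleft : Function.LeftInverse g2 f2 := by
    intro q
    have : g2 (f2 q) = ((2:ℝ)⁻¹ * (L q - d * q.2), q.2) := by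
      simp [hg2, hf2, hg1]
    rw [this, hLp q]
    ext <;> simp <;> ring
  have hright : Function.RightInverse g2 f2 := by
    intro q
    have : f2 (g2 q) = (L ((2:ℝ)⁻¹ * (q.1 - d * q.2), q.2), q.2) := by
      simp [hg2, hf2, hg1]
    rw [this, hLp _]
    ext <;> simp <;> ring
  set e : (ℝ × ℝ) ≃L[ℝ] (ℝ × ℝ) := ContinuousLinearEquiv.equivOfInverse f2 g2 hleft hright
  have hfd : HasFDerivAt G (e : (ℝ × ℝ) →L[ℝ] (ℝ × ℝ)) pt := by
    have : HasFDerivAt G f2 pt := hL.prodMk (hasFDerivAt_snd)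
    exact this
  set Ψ : ℝ × ℝ → ℝ × ℝ := hG.localInverse hfd one_ne_zero with hΨdef
  have hΨpt : Ψ (G pt) = pt := hG.localInverse_apply_image hfd one_ne_zero
  have hGpt : G pt = ((0:ℝ), (0:ℝ)) := by
    have h0 : Hf M Λ σ pt = 0 := Hf_zero_pt M Λ σ hM hsub hσ2
    simp [hGdef, h0]; rfl
  have hΨcd : ContDiffAt ℝ 1 Ψ ((0:ℝ), (0:ℝ)) := by
    rw [← hGpt]; exact hG.to_localInverse hfd one_ne_zero
  have hinv : ∀ᶠ q in nhds ((0:ℝ), (0:ℝ)) , G (Ψ q) = q := by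
    rw [← hGpt]
    exact (hG.hasStrictFDerivAt' hfd one_ne_zero).eventually_right_inverse
  -- good set
  set S : Set (ℝ × ℝ) := {p | 0 < p.1 ∧ 0 < Δr M Λ p.2 p.1 ∧
      0 < (p.1^2 + p.2^2)^2 - p.2^2 * Δr M Λ p.2 p.1} with hS
  have hScont1 : Continuous (fun p : ℝ × ℝ => Δr M Λ p.2 p.1) := by
    unfold Δr; fun_prop (disch := norm_num)
  have hScont2 : Continuous (fun p : ℝ × ℝ => (p.1^2 + p.2^2)^2 - p.2^2 * Δr M Λ p.2 p.1) := by
    unfold Δr; fun_prop (disch := norm_num)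
  have hSopen : IsOpen S :=
    (isOpen_Ioi.preimage continuous_fst).inter
      ((isOpen_Ioi.preimage hScont1).inter (isOpen_Ioi.preimage hScont2))
  have hptS : pt ∈ S := ⟨by positivity, hDpt, hEpt⟩
  have hΨS : ∀ᶠ q in nhds ((0:ℝ), (0:ℝ)), Ψ q ∈ S := by
    have hc : ContinuousAt Ψ ((0:ℝ), (0:ℝ)) := hΨcd.continuousAt
    have : S ∈ nhds (Ψ ((0:ℝ),(0:ℝ))) := by
      rw [← hGpt, hΨpt]; exact hSopen.mem_nhds hptS
    exact hc.eventually_mem this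
  have hΨev : ∀ᶠ q in nhds ((0:ℝ), (0:ℝ)), ContDiffAt ℝ 1 Ψ q :=
    hΨcd.eventually (by simp)
  have htot : ∀ᶠ q in nhds ((0:ℝ), (0:ℝ)),
      G (Ψ q) = q ∧ ContDiffAt ℝ 1 Ψ q ∧ Ψ q ∈ S := by
    filter_upwards [hinv, hΨev, hΨS] with q h1 h2 h3
    exact ⟨h1, h2, h3⟩
  have hι : ContinuousAt (fun a : ℝ => ((0:ℝ), a)) 0 :=
    (continuous_const.prodMk continuous_id).continuousAt
  have htot' : ∀ᶠ a in nhds (0:ℝ),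
      G (Ψ (0, a)) = (0, a) ∧ ContDiffAt ℝ 1 Ψ (0, a) ∧ Ψ (0, a) ∈ S := hι.eventually htot
  obtain ⟨ε, hε, hball⟩ := Metric.eventually_nhds_iff.mp htot'
  refine ⟨ε, hε, fun a => (Ψ (0, a)).1, fun a => Ωf M Λ σ (Ψ (0, a)), ?_, ?_, ?_, ?_, ?_⟩
  · -- ContDiffOn r
    intro a ha
    have haε : dist a 0 < ε := by
      rw [Real.dist_eq, sub_zero]; rw [Set.mem_Ioo] at ha; exact abs_lt.mpr ⟨ha.1, ha.2⟩
    obtain ⟨-, h2, -⟩ := hball haε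
    have hι2 : ContDiffAt ℝ 1 (fun b : ℝ => (((0:ℝ), b) : ℝ × ℝ)) a :=
      (contDiff_const.prodMk contDiff_id).contDiffAt
    exact ((contDiffAt_fst.comp _ (h2.comp a hι2))).contDiffWithinAt
  · -- ContDiffOn Ω
    intro a ha
    have haε : dist a 0 < ε := by
      rw [Real.dist_eq, sub_zero]; rw [Set.mem_Ioo] at ha; exact abs_lt.mpr ⟨ha.1, ha.2⟩
    obtain ⟨-, h2, h3⟩ := hball haε
    have hι2 : ContDiffAt ℝ 1 (fun b : ℝ => (((0:ℝ), b) : ℝ × ℝ)) a :=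
      (contDiff_const.prodMk contDiff_id).contDiffAt
    have hΩ : ContDiffAt ℝ 1 (Ωf M Λ σ) (Ψ (0, a)) :=
      contDiffAt_Ωf M Λ σ _ h3.2.1.ne' h3.2.2.ne'
    exact (hΩ.comp a (h2.comp a hι2)).contDiffWithinAt
  · -- r 0 = 3M
    have h00 : Ψ (0, 0) = pt := by rw [← hGpt]; exact hΨpt
    show (Ψ (0, 0)).1 = 3 * M
    rw [h00]
  · -- Ω 0
    have h00 : Ψ (0, 0) = pt := by rw [← hGpt]; exact hΨpt
    show Ωf M Λ σ (Ψ (0, 0)) = σ * Ωph M Λ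
    rw [h00]
    exact Ωf_zero_pt M Λ σ hM hsub
  · -- main conditions
    intro a ha
    have haε : dist a 0 < ε := by rw [Real.dist_eq, sub_zero]; exact ha
    obtain ⟨h1, -, h3⟩ := hball haε
    set p : ℝ × ℝ := Ψ (0, a) with hpdef
    have hp2 : p.2 = a := congrArg Prod.snd h1
    have hH0 : Hf M Λ σ p = 0 := congrArg Prod.fst h1
    have hr0 : 0 < p.1 := h3.1
    have hD0 : 0 < Δr M Λ p.2 p.1 := h3.2.1
    have hE0 : 0 < (p.1^2 + p.2^2)^2 - p.2^2 * Δr M Λ p.2 p.1 := h3.2.2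
    have hP0 : Pf M Λ a (Ωf M Λ σ p) p.1 = 0 := by
      have := Pf_root M Λ σ p hD0.le hE0.ne' hσ2
      rwa [hp2] at this
    have hQ0 : Qf M Λ a (Ωf M Λ σ p) p.1 = 0 := by
      have : Qf M Λ p.2 (Ωf M Λ σ p) p.1 = 0 := hH0
      rwa [hp2] at this
    have hΞ : Ξ Λ a ≠ 0 := by unfold Ξ; positivity
    constructor
    · rw [Φeq_eq M Λ p.1 (Ωf M Λ σ p) a hr0.ne' hΞ, hP0, zero_div]
    · have hev : (fun ρ => Pf M Λ a (Ωf M Λ σ p) ρ / (ρ^2 * (Ξ Λ a)^2))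
          =ᶠ[nhds p.1] (fun ρ => Φeq M Λ ρ (Ωf M Λ σ p) a) := by
        filter_upwards [eventually_ne_nhds hr0.ne'] with ρ hρ
        exact (Φeq_eq M Λ ρ (Ωf M Λ σ p) a hρ hΞ).symm
      have hden : HasDerivAt (fun ρ : ℝ => ρ^2 * (Ξ Λ a)^2) (2 * p.1 * (Ξ Λ a)^2) p.1 := by
        have := (hasDerivAt_pow 2 p.1).mul_const ((Ξ Λ a)^2)
        simpa using this
      have hdenne : p.1^2 * (Ξ Λ a)^2 ≠ 0 := by positivity
      have hq := (hasDerivAt_Pf M Λ a (Ωf M Λ σ p) p.1).div hden hdenne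
      rw [hP0, hQ0] at hq
      simp only [zero_mul, mul_zero, sub_zero, zero_sub, zero_div, neg_zero] at hq
      exact hq.congr_of_eventuallyEq hev.symm
end

section
/- Fix M > 0 and Λ > 0 with 9ΛM² < 1 and a sign σ ∈ {+1, −1}. Suppose ε > 0 and r, Ω : (−ε, ε) → ℝ are differentiable at 0 with r(0) = 3M and Ω(0) = σ·Ω_ph(M), and suppose Φ(r(a), Ω(a), a) = 0 for all |a| < ε. Then the derivative of Ω at 0 equals c_Z(M) := (2 + 9ΛM²)/(27M²). -/
set_option maxHeartbeats 1000000 in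
/-- If `r, Ω` are differentiable at `0` with `r(0) = 3M`,
`Ω(0) = σ·Ω_ph(M)` (`σ ∈ {+1, -1}`), and `Φ(r(a), Ω(a), a) = 0` for all `|a| < ε`,
then `Ω'(0) = c_Z(M) = (2 + 9ΛM²)/(27M²)` (the linear Zeeman splitting coefficient). -/
theorem stmt_6 (M Λ : ℝ) (hM : 0 < M) (hΛ : 0 < Λ) (hsub : 9 * Λ * M ^ 2 < 1)
    (σ : ℝ) (hσ : σ = 1 ∨ σ = -1)
    (ε : ℝ) (hε : 0 < ε) (r Ω : ℝ → ℝ)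
    (hr : DifferentiableAt ℝ r 0) (hΩ : DifferentiableAt ℝ Ω 0)
    (hr0 : r 0 = 3 * M) (hΩ0 : Ω 0 = σ * Ωph M Λ)
    (horbit : ∀ a : ℝ, |a| < ε → Φeq M Λ (r a) (Ω a) a = 0) :
    deriv Ω 0 = (2 + 9 * Λ * M ^ 2) / (27 * M ^ 2) := by
  have hu : HasDerivAt r (deriv r 0) 0 := hr.hasDerivAt
  have hv : HasDerivAt Ω (deriv Ω 0) 0 := hΩ.hasDerivAt
  have hid : HasDerivAt (fun x : ℝ => x) 1 0 := hasDerivAt_id 0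
  have hr2 := hu.pow 2
  have ha2 := hasDerivAt_pow 2 (0:ℝ)
  have hS := hr2.add ha2
  have hQ := (hasDerivAt_const (0:ℝ) (1:ℝ)).sub ((hr2.const_mul Λ).div_const 3)
  have hΔ := (hS.mul hQ).sub (hu.const_mul (2 * M))
  have hX := (hasDerivAt_const (0:ℝ) (1:ℝ)).add ((ha2.const_mul Λ).div_const 3)
  have hbig := (((hΔ.neg.add ha2).mul (hX.pow 2)).add
      (((hv.const_mul 2).mul (hid.mul (hΔ.sub hS))).mul hX)).add
      ((hv.pow 2).mul ((hS.pow 2).sub (ha2.mul hΔ)))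
  set F : ℝ → ℝ := fun a =>
    (-((r a ^ 2 + a ^ 2) * (1 - Λ * r a ^ 2 / 3) - 2 * M * r a) + a ^ 2) *
        (1 + Λ * a ^ 2 / 3) ^ 2 +
      2 * Ω a * (a * ((r a ^ 2 + a ^ 2) * (1 - Λ * r a ^ 2 / 3) - 2 * M * r a -
        (r a ^ 2 + a ^ 2))) * (1 + Λ * a ^ 2 / 3) +
      Ω a ^ 2 * ((r a ^ 2 + a ^ 2) ^ 2 -
        a ^ 2 * ((r a ^ 2 + a ^ 2) * (1 - Λ * r a ^ 2 / 3) - 2 * M * r a)) with hFdef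
  -- F vanishes near 0
  have hrne : ∀ᶠ a in nhds (0:ℝ), r a ≠ 0 := by
    have : r 0 ≠ 0 := by rw [hr0]; positivity
    exact hr.continuousAt.eventually_ne this
  have habs : ∀ᶠ a in nhds (0:ℝ), |a| < ε := by
    have := Metric.ball_mem_nhds (0:ℝ) hε
    filter_upwards [this] with a ha
    simpa [Real.dist_eq] using ha
  have hF0 : F =ᶠ[nhds (0:ℝ)] fun _ => (0:ℝ) := by
    filter_upwards [hrne, habs] with a hne ha
    have horb := horbit a ha
    have hΞ : (1 + Λ * a ^ 2 / 3) ≠ 0 := by positivity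
    have hcalc : F a = Φeq M Λ (r a) (Ω a) a * ((r a) ^ 2 * (1 + Λ * a ^ 2 / 3) ^ 2) := by
      simp only [hFdef, Φeq, gtt, gtφ, gφφ, Δr, Ξ]
      field_simp
    rw [hcalc, horb, zero_mul]
  have hd0 : deriv F 0 = 0 := by
    rw [hF0.deriv_eq]; simp
  have key := hbig.deriv.symm.trans hd0
  simp only [Pi.add_apply, Pi.sub_apply, Pi.mul_apply, Pi.pow_apply, Pi.neg_apply, Nat.cast_ofNat, Nat.add_one_sub_one, pow_one] at key
  rw [hr0] at key
  -- algebraic facts about Ω 0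
  have h3 : Real.sqrt 3 ^ 2 = 3 := Real.sq_sqrt (by norm_num)
  have hs : Real.sqrt (1 - 9 * Λ * M ^ 2) ^ 2 = 1 - 9 * Λ * M ^ 2 :=
    Real.sq_sqrt (by linarith)
  have hσ2 : σ ^ 2 = 1 := by rcases hσ with h | h <;> simp [h]
  have hW2 : 27 * M ^ 2 * (Ω 0) ^ 2 = 1 - 9 * Λ * M ^ 2 := by
    have hd : (3 * Real.sqrt 3 * M) ^ 2 = 27 * M ^ 2 := by
      rw [mul_pow, mul_pow, h3]; ring
    rw [hΩ0, Ωph, mul_pow, div_pow, hσ2, hs, hd, one_mul]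
    field_simp
  have hWne : Ω 0 ≠ 0 := by
    intro h
    rw [h] at hW2
    nlinarith
  have keyfin : (6 * M ^ 2 * Ω 0) * (deriv Ω 0 * (27 * M ^ 2)) =
      (6 * M ^ 2 * Ω 0) * (2 + 9 * Λ * M ^ 2) := by
    linear_combination key - 4 * M * deriv r 0 * hW2
  have hc : (6 * M ^ 2 * Ω 0) ≠ 0 :=
    mul_ne_zero (by positivity) hWne
  have h27 : (27:ℝ) * M ^ 2 ≠ 0 := by positivity
  rw [eq_div_iff h27]
  exact mul_left_cancel₀ hc keyfin
end

section
/- Let α₁ ≤ β₁ and α₂ ≤ β₂ be real numbers and let R := [α₁, β₁] × [α₂, β₂] ⊂ ℝ². Let F = (F₁, F₂) : ℝ² → ℝ² be continuously differentiable on an open set containing R. Assume that at every point x ∈ R the Jacobian matrix DF(x) is a P-matrix, i.e. ∂F₁/∂x₁(x) > 0, ∂F₂/∂x₂(x) > 0 and det DF(x) > 0. Then F is injective on R. -/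
set_option linter.unnecessarySeqFocus false
set_option maxHeartbeats 1000000

open Set Filter Topology

namespace GN


variable {F : ℝ × ℝ → ℝ × ℝ} {V : Set (ℝ × ℝ)}

/-- Hypothesis bundle: `V` is open, `F` is `C¹` on `V`, and the Jacobian of `F` is a
P-matrix at every point of `V`. -/
structure Good (F : ℝ × ℝ → ℝ × ℝ) (V : Set (ℝ × ℝ)) : Prop where
  isOpen : IsOpen V
  diff : ∀ z ∈ V, ContDiffAt ℝ 1 F z
  pos11 : ∀ z ∈ V, 0 < (fderiv ℝ F z (1, 0)).1
  pos22 : ∀ z ∈ V, 0 < (fderiv ℝ F z (0, 1)).2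
  posdet : ∀ z ∈ V, 0 < (fderiv ℝ F z (1, 0)).1 * (fderiv ℝ F z (0, 1)).2 -
      (fderiv ℝ F z (0, 1)).1 * (fderiv ℝ F z (1, 0)).2

lemma hasDerivAt_row (hd : DifferentiableAt ℝ F z) :
    HasDerivAt (fun t => F (t, z.2)) (fderiv ℝ F z (1, 0)) z.1 := by
  have hc : HasDerivAt (fun t : ℝ => ((t, z.2) : ℝ × ℝ)) ((1 : ℝ), (0 : ℝ)) z.1 :=
    (hasDerivAt_id _).prodMk (hasDerivAt_const _ _)
  exact hd.hasFDerivAt.comp_hasDerivAt z.1 hc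

lemma hasDerivAt_col (hd : DifferentiableAt ℝ F z) :
    HasDerivAt (fun t => F (z.1, t)) (fderiv ℝ F z (0, 1)) z.2 := by
  have hc : HasDerivAt (fun t : ℝ => ((z.1, t) : ℝ × ℝ)) ((0 : ℝ), (1 : ℝ)) z.2 :=
    (hasDerivAt_const _ _).prodMk (hasDerivAt_id _)
  exact hd.hasFDerivAt.comp_hasDerivAt z.2 hc

lemma hasDerivAt_row1 (hd : DifferentiableAt ℝ F z) :
    HasDerivAt (fun t => (F (t, z.2)).1) ((fderiv ℝ F z (1, 0)).1) z.1 :=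
  (hasDerivAt_row hd).fst

lemma hasDerivAt_row2 (hd : DifferentiableAt ℝ F z) :
    HasDerivAt (fun t => (F (t, z.2)).2) ((fderiv ℝ F z (1, 0)).2) z.1 :=
  (hasDerivAt_row hd).snd

lemma hasDerivAt_col1 (hd : DifferentiableAt ℝ F z) :
    HasDerivAt (fun t => (F (z.1, t)).1) ((fderiv ℝ F z (0, 1)).1) z.2 :=
  (hasDerivAt_col hd).fst

lemma hasDerivAt_col2 (hd : DifferentiableAt ℝ F z) :
    HasDerivAt (fun t => (F (z.1, t)).2) ((fderiv ℝ F z (0, 1)).2) z.2 :=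
  (hasDerivAt_col hd).snd

/-- `F₁` is strictly increasing along horizontal segments inside `V`. -/
lemma row_lt (h : Good F V) {y x₁ x₂ : ℝ} (hx : x₁ < x₂)
    (hseg : ∀ x ∈ Icc x₁ x₂, ((x, y) : ℝ × ℝ) ∈ V) :
    (F (x₁, y)).1 < (F (x₂, y)).1 := by
  have mono : StrictMonoOn (fun x => (F (x, y)).1) (Icc x₁ x₂) := by
    apply strictMonoOn_of_deriv_pos (convex_Icc _ _)
    · intro x hxm
      have hd := ((h.diff _ (hseg x hxm)).differentiableAt one_ne_zero)
      exact (hasDerivAt_row1 (z := (x, y)) hd).continuousAt.continuousWithinAt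
    · intro x hxm
      rw [interior_Icc] at hxm
      have hv := hseg x (Ioo_subset_Icc_self hxm)
      have hd := ((h.diff _ hv).differentiableAt one_ne_zero)
      rw [(hasDerivAt_row1 (z := (x, y)) hd).deriv]
      exact h.pos11 _ hv
  exact mono (left_mem_Icc.2 hx.le) (right_mem_Icc.2 hx.le) hx

/-- `F₂` is strictly increasing along vertical segments inside `V`. -/
lemma col_lt (h : Good F V) {x y₁ y₂ : ℝ} (hy : y₁ < y₂)
    (hseg : ∀ y ∈ Icc y₁ y₂, ((x, y) : ℝ × ℝ) ∈ V) :
    (F (x, y₁)).2 < (F (x, y₂)).2 := by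
  have mono : StrictMonoOn (fun y => (F (x, y)).2) (Icc y₁ y₂) := by
    apply strictMonoOn_of_deriv_pos (convex_Icc _ _)
    · intro y hym
      have hd := ((h.diff _ (hseg y hym)).differentiableAt one_ne_zero)
      exact (hasDerivAt_col2 (z := (x, y)) hd).continuousAt.continuousWithinAt
    · intro y hym
      rw [interior_Icc] at hym
      have hv := hseg y (Ioo_subset_Icc_self hym)
      have hd := ((h.diff _ hv).differentiableAt one_ne_zero)
      rw [(hasDerivAt_col2 (z := (x, y)) hd).deriv]
      exact h.pos22 _ hv
  exact mono (left_mem_Icc.2 hy.le) (right_mem_Icc.2 hy.le) hy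



/-- The linear shear `(u, v) ↦ (u, r u + t v)`, as a linear equivalence when `t ≠ 0`. -/
noncomputable def shear (r t : ℝ) (ht : t ≠ 0) : (ℝ × ℝ) ≃ₗ[ℝ] (ℝ × ℝ) where
  toFun w := (w.1, r * w.1 + t * w.2)
  invFun w := (w.1, (w.2 - r * w.1) / t)
  map_add' x y := by ext <;> simp <;> ring
  map_smul' c x := by ext <;> simp <;> ring
  left_inv x := by ext <;> field_simp <;> ring
  right_inv x := by ext <;> field_simp <;> ring

lemma apply_pair (L : ℝ × ℝ →L[ℝ] ℝ × ℝ) (u v : ℝ) :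
    L (u, v) = u • L (1, 0) + v • L (0, 1) := by
  have h : ((u, v) : ℝ × ℝ) = u • ((1 : ℝ), (0 : ℝ)) + v • ((0 : ℝ), (1 : ℝ)) := by
    ext <;> simp
  rw [h, map_add, map_smul, map_smul]


/-- Compactness of the solution set used in the continuation argument (with `f`-constraint). -/
lemma isCompact_sol (hF : ContinuousOn F (Icc lo hi ×ˢ Icc α₂ β₂)) (k c : ℝ) :
    IsCompact {x ∈ Icc lo hi | ∃ y ∈ Icc α₂ β₂, (F (x, y)).2 = k ∧ c ≤ (F (x, y)).1} := by
  have hK : IsCompact (Icc lo hi ×ˢ Icc α₂ β₂) := isCompact_Icc.prod isCompact_Icc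
  have hT : IsClosed {q : ℝ × ℝ | q.2 = k ∧ c ≤ q.1} :=
    (isClosed_eq continuous_snd continuous_const).inter
      (isClosed_le continuous_const continuous_fst)
  have hC : IsClosed ((Icc lo hi ×ˢ Icc α₂ β₂) ∩ F ⁻¹' {q : ℝ × ℝ | q.2 = k ∧ c ≤ q.1}) :=
    hF.preimage_isClosed_of_isClosed (isClosed_Icc.prod isClosed_Icc) hT
  have hCc : IsCompact ((Icc lo hi ×ˢ Icc α₂ β₂) ∩ F ⁻¹' {q : ℝ × ℝ | q.2 = k ∧ c ≤ q.1}) :=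
    hK.of_isClosed_subset hC inter_subset_left
  have himg := hCc.image continuous_fst
  convert himg using 1
  ext x
  constructor
  · rintro ⟨hx, y, hy, hgy, hfy⟩
    exact ⟨(x, y), ⟨⟨hx, hy⟩, hgy, hfy⟩, rfl⟩
  · rintro ⟨⟨x', y⟩, ⟨⟨hx, hy⟩, hgy, hfy⟩, rfl⟩
    exact ⟨hx, y, hy, hgy, hfy⟩

/-- Compactness of the solution set (without `f`-constraint). -/
lemma isCompact_sol' (hF : ContinuousOn F (Icc lo hi ×ˢ Icc α₂ β₂)) (k : ℝ) :
    IsCompact {x ∈ Icc lo hi | ∃ y ∈ Icc α₂ β₂, (F (x, y)).2 = k} := by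
  have hK : IsCompact (Icc lo hi ×ˢ Icc α₂ β₂) := isCompact_Icc.prod isCompact_Icc
  have hT : IsClosed {q : ℝ × ℝ | q.2 = k} := isClosed_eq continuous_snd continuous_const
  have hC : IsClosed ((Icc lo hi ×ˢ Icc α₂ β₂) ∩ F ⁻¹' {q : ℝ × ℝ | q.2 = k}) :=
    hF.preimage_isClosed_of_isClosed (isClosed_Icc.prod isClosed_Icc) hT
  have hCc : IsCompact ((Icc lo hi ×ˢ Icc α₂ β₂) ∩ F ⁻¹' {q : ℝ × ℝ | q.2 = k}) :=
    hK.of_isClosed_subset hC inter_subset_left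
  have himg := hCc.image continuous_fst
  convert himg using 1
  ext x
  constructor
  · rintro ⟨hx, y, hy, hgy⟩
    exact ⟨(x, y), ⟨⟨hx, hy⟩, hgy⟩, rfl⟩
  · rintro ⟨⟨x', y⟩, ⟨⟨hx, hy⟩, hgy⟩, rfl⟩
    exact ⟨hx, y, hy, hgy⟩


/-- The key continuation step: from a point `(s, ys)` of the rectangle lying on the level
set `F₂ = k`, with a solution of `F₂ = k` also available on the vertical line `x = w` (`w > s`),
one can move strictly to the right staying on the level set while strictly increasing `F₁`. -/
lemma step (h : Good F V) {α₁ β₁ α₂ β₂ : ℝ}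
    (hR : Icc α₁ β₁ ×ˢ Icc α₂ β₂ ⊆ V) (h₂ : α₂ ≤ β₂)
    {s ys w : ℝ} (hs1 : α₁ ≤ s) (hy1 : α₂ ≤ ys) (hy2 : ys ≤ β₂)
    (hsw : s < w) (hw : w ≤ β₁)
    (hwit : ∃ y' ∈ Icc α₂ β₂, (F (w, y')).2 = (F (s, ys)).2) :
    ∃ x ∈ Ioc s w, ∃ y ∈ Icc α₂ β₂,
      (F (x, y)).2 = (F (s, ys)).2 ∧ (F (s, ys)).1 < (F (x, y)).1 := by
  have hzV : ((s, ys) : ℝ × ℝ) ∈ V := hR ⟨⟨hs1, le_trans hsw.le hw⟩, ⟨hy1, hy2⟩⟩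
  set k := (F (s, ys)).2 with hk
  have htz : 0 < (fderiv ℝ F (s, ys) (0, 1)).2 := h.pos22 _ hzV
  have hdet : 0 < (fderiv ℝ F (s, ys) (1, 0)).1 * (fderiv ℝ F (s, ys) (0, 1)).2 -
      (fderiv ℝ F (s, ys) (0, 1)).1 * (fderiv ℝ F (s, ys) (1, 0)).2 := h.posdet _ hzV
  set e := (shear ((fderiv ℝ F (s, ys)) (1, 0)).2 ((fderiv ℝ F (s, ys)) (0, 1)).2
      htz.ne').toContinuousLinearEquiv with he
  have hFd : HasStrictFDerivAt F (fderiv ℝ F (s, ys)) (s, ys) :=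
    (h.diff _ hzV).hasStrictFDerivAt one_ne_zero
  set G : ℝ × ℝ → ℝ × ℝ := fun p => (p.1, (F p).2) with hGdef
  have hGd : HasStrictFDerivAt G (e : (ℝ × ℝ) →L[ℝ] (ℝ × ℝ)) (s, ys) := by
    have h2 : HasStrictFDerivAt (fun p => (F p).2)
        ((ContinuousLinearMap.snd ℝ ℝ ℝ).comp (fderiv ℝ F (s, ys))) (s, ys) :=
      (ContinuousLinearMap.snd ℝ ℝ ℝ).hasStrictFDerivAt.comp _ hFd
    have h12 := ((ContinuousLinearMap.fst ℝ ℝ ℝ).hasStrictFDerivAt).prodMk h2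
    refine h12.congr_fderiv ?_
    apply ContinuousLinearMap.ext
    rintro ⟨u, v⟩
    have hv : (fderiv ℝ F (s, ys)) (u, v) =
        u • (fderiv ℝ F (s, ys)) (1, 0) + v • (fderiv ℝ F (s, ys)) (0, 1) := apply_pair _ u v
    ext
    · simp [he, shear]
    · simp [he, shear, hv]
      ring
  set N := HasStrictFDerivAt.localInverse G e (s, ys) hGd with hNdef
  set Ψ : ℝ → ℝ := fun x => (N (x, k)).2 with hΨdef
  have hGz : G (s, ys) = (s, k) := rfl
  have hNz : N (s, k) = (s, ys) := by
    have := hGd.localInverse_apply_image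
    rwa [hGz] at this
  have hΨs : Ψ s = ys := by rw [hΨdef]; simp only [hNz]
  have hNd : HasStrictFDerivAt N (e.symm : (ℝ × ℝ) →L[ℝ] (ℝ × ℝ)) (s, k) := by
    have := hGd.to_localInverse
    rwa [hGz] at this
  have hmd : HasDerivAt (fun x : ℝ => ((x, k) : ℝ × ℝ)) ((1 : ℝ), (0 : ℝ)) s :=
    (hasDerivAt_id _).prodMk (hasDerivAt_const _ _)
  have hNΨd : HasDerivAt (fun x : ℝ => N (x, k)) (e.symm (1, 0)) s :=
    by have := hNd.hasFDerivAt.comp_hasDerivAt s hmd; exact this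
  have hesymm : (e.symm ((1 : ℝ), (0 : ℝ)) : ℝ × ℝ) =
      (1, -((fderiv ℝ F (s, ys)) (1, 0)).2 / ((fderiv ℝ F (s, ys)) (0, 1)).2) := by
    rw [he]
    simp [shear, LinearEquiv.coe_toContinuousLinearEquiv_symm]
  rw [hesymm] at hNΨd
  have hΨd : HasDerivAt Ψ
      (-((fderiv ℝ F (s, ys)) (1, 0)).2 / ((fderiv ℝ F (s, ys)) (0, 1)).2) s := hNΨd.snd
  -- f along the implicit curve
  set φ : ℝ → ℝ := fun x => (F (x, Ψ x)).1 with hφdef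
  have hγd : HasDerivAt (fun x => ((x, Ψ x) : ℝ × ℝ))
      ((1 : ℝ), -((fderiv ℝ F (s, ys)) (1, 0)).2 / ((fderiv ℝ F (s, ys)) (0, 1)).2) s :=
    (hasDerivAt_id _).prodMk hΨd
  have hFz : HasFDerivAt F (fderiv ℝ F (s, ys)) ((s, Ψ s) : ℝ × ℝ) := by
    rw [hΨs]; exact hFd.hasFDerivAt
  have hφd : HasDerivAt φ
      (((fderiv ℝ F (s, ys)) (1, -((fderiv ℝ F (s, ys)) (1, 0)).2 /
        ((fderiv ℝ F (s, ys)) (0, 1)).2)).1) s :=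
    by have := hFz.comp_hasDerivAt s hγd; exact this.fst
  have hφpos : 0 < ((fderiv ℝ F (s, ys)) (1, -((fderiv ℝ F (s, ys)) (1, 0)).2 /
      ((fderiv ℝ F (s, ys)) (0, 1)).2)).1 := by
    rw [apply_pair]
    simp only [Prod.fst_add, Prod.smul_fst, smul_eq_mul, one_mul]
    have : ((fderiv ℝ F (s, ys)) (1, 0)).1 +
        -((fderiv ℝ F (s, ys)) (1, 0)).2 / ((fderiv ℝ F (s, ys)) (0, 1)).2 *
          ((fderiv ℝ F (s, ys)) (0, 1)).1 =
        (((fderiv ℝ F (s, ys)) (1, 0)).1 * ((fderiv ℝ F (s, ys)) (0, 1)).2 -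
          ((fderiv ℝ F (s, ys)) (0, 1)).1 * ((fderiv ℝ F (s, ys)) (1, 0)).2) /
          ((fderiv ℝ F (s, ys)) (0, 1)).2 := by
      field_simp
      ring
    rw [this]
    exact div_pos hdet htz
  have hslope : ∀ᶠ x in 𝓝[>] s, (F (s, ys)).1 < φ x := by
    have ht := hasDerivAt_iff_tendsto_slope.mp hφd
    have hpos' := ht.eventually (lt_mem_nhds hφpos)
    have hmono : 𝓝[>] s ≤ 𝓝[≠] s := nhdsWithin_mono s (fun x hx => ne_of_gt hx)
    filter_upwards [hpos'.filter_mono hmono, eventually_mem_nhdsWithin] with x h1 h2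
    rw [slope_def_field] at h1
    have hxs : (0:ℝ) < x - s := sub_pos.mpr h2
    have hnum : 0 < φ x - φ s := by
      rcases div_pos_iff.mp h1 with ⟨h', _⟩ | ⟨_, h''⟩
      · exact h'
      · linarith
    have hφs : φ s = (F (s, ys)).1 := by rw [hφdef]; simp only [hΨs]
    linarith
  -- a box around (s, ys) inside V
  obtain ⟨ε, hε, hball⟩ : ∃ ε > 0, ∀ p : ℝ × ℝ, |p.1 - s| ≤ ε → |p.2 - ys| ≤ ε → p ∈ V := by
    obtain ⟨δ', hδ', hsub⟩ := Metric.isOpen_iff.mp h.isOpen _ hzV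
    refine ⟨δ' / 2, by linarith, fun p h1 h2 => hsub ?_⟩
    rw [Metric.mem_ball, Prod.dist_eq, Real.dist_eq, Real.dist_eq]
    exact max_lt (by simp at h1 ⊢; linarith) (by simp at h2 ⊢; linarith)
  -- the local homeomorphism data
  set W := (hGd.toOpenPartialHomeomorph G).target with hWdef
  have hWo : IsOpen W := (hGd.toOpenPartialHomeomorph G).open_target
  have hWz : ((s, k) : ℝ × ℝ) ∈ W := by
    have := hGd.image_mem_toOpenPartialHomeomorph_target
    rwa [hGz] at this
  have hNW : ContinuousOn N W := by
    rw [hNdef, HasStrictFDerivAt.localInverse_def]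
    exact (hGd.toOpenPartialHomeomorph G).continuousOn_symm
  have hmc : ContinuousAt (fun x : ℝ => ((x, k) : ℝ × ℝ)) s :=
    (continuous_id.prodMk continuous_const).continuousAt
  have hri : ∀ᶠ p in 𝓝 ((s, k) : ℝ × ℝ), G (N p) = p := by
    have := hGd.eventually_right_inverse
    rwa [hGz] at this
  have hNc : ContinuousAt N ((s, k) : ℝ × ℝ) := hNW.continuousAt (hWo.mem_nhds hWz)
  have hΨc : ContinuousAt Ψ s := by
    have h1 : ContinuousAt (fun x : ℝ => N (x, k)) s := Filter.Tendsto.comp hNc hmc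
    exact h1.snd
  have hevW : ∀ᶠ x in 𝓝 s, ((x, k) : ℝ × ℝ) ∈ W := hmc.eventually (hWo.mem_nhds hWz)
  have hevG : ∀ᶠ x in 𝓝 s, G (N (x, k)) = (x, k) := hmc.eventually hri
  have hevΨ : ∀ᶠ x in 𝓝 s, |Ψ x - ys| < ε := by
    have hev' : ∀ᶠ u in 𝓝 (Ψ s), |u - ys| < ε := by
      rw [hΨs]
      have hop : IsOpen {u : ℝ | |u - ys| < ε} :=
        isOpen_lt (continuous_abs.comp (continuous_id.sub continuous_const)) continuous_const
      exact hop.mem_nhds (by simpa using hε)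
    exact hΨc.eventually hev'
  obtain ⟨δ₁, hδ₁, hP1⟩ := Metric.eventually_nhds_iff.mp ((hevW.and hevG).and hevΨ)
  obtain ⟨u, hu, hIoc⟩ := mem_nhdsGT_iff_exists_Ioc_subset.mp hslope
  -- choose δ
  set δ := min (min (δ₁ / 2) (u - s)) (min ε (w - s)) with hδdef
  have hus : s < u := hu
  have hδpos : 0 < δ :=
    lt_min (lt_min (by linarith) (by linarith)) (lt_min hε (by linarith))
  have hδδ₁ : δ < δ₁ := lt_of_le_of_lt (le_trans (min_le_left _ _) (min_le_left _ _)) (by linarith)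
  have hδu : s + δ ≤ u := by
    have h1 : δ ≤ u - s := le_trans (min_le_left _ _) (min_le_right _ _)
    linarith
  have hδε : δ ≤ ε := le_trans (min_le_right _ _) (min_le_left _ _)
  have hδw : s + δ ≤ w := by
    have h1 : δ ≤ w - s := le_trans (min_le_right _ _) (min_le_right _ _)
    linarith
  have hkey : ∀ x ∈ Icc s (s + δ),
      (((x, k) : ℝ × ℝ) ∈ W ∧ G (N (x, k)) = (x, k)) ∧ |Ψ x - ys| < ε := by
    intro x hx
    apply hP1
    rw [Real.dist_eq]
    have : |x - s| ≤ δ := by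
      rw [abs_le]; constructor <;> [linarith [hx.1]; linarith [hx.2]]
    linarith
  have hfgt : ∀ x ∈ Ioc s (s + δ), (F (s, ys)).1 < φ x := by
    intro x hx
    exact hIoc ⟨hx.1, le_trans hx.2 hδu⟩
  -- identification of N with the implicit graph
  have hNΨ : ∀ x ∈ Icc s (s + δ), N (x, k) = (x, Ψ x) := by
    intro x hx
    have h2 := ((hkey x hx).1).2
    have h1 : (N (x, k)).1 = x := congrArg Prod.fst h2
    exact Prod.ext_iff.mpr ⟨h1, rfl⟩
  have hgΨ : ∀ x ∈ Icc s (s + δ), (F (x, Ψ x)).2 = k := by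
    intro x hx
    have h2 := congrArg Prod.snd ((hkey x hx).1).2
    rw [hNΨ x hx] at h2
    exact h2
  have hΨnear : ∀ x ∈ Icc s (s + δ), |Ψ x - ys| < ε := fun x hx => (hkey x hx).2
  -- main case split
  by_cases hcase : ∃ x ∈ Ioc s (s + δ), Ψ x ∈ Icc α₂ β₂
  · obtain ⟨x, hx, hyx⟩ := hcase
    exact ⟨x, ⟨hx.1, le_trans hx.2 hδw⟩, Ψ x, hyx,
      hgΨ x (Ioc_subset_Icc_self hx), hfgt x hx⟩
  push_neg at hcase
  have hΨcont : ContinuousOn Ψ (Icc s (s + δ)) := by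
    intro x hx
    have hNcx : ContinuousAt N ((x, k) : ℝ × ℝ) :=
      hNW.continuousAt (hWo.mem_nhds ((hkey x hx).1).1)
    have hmcx : ContinuousAt (fun xx : ℝ => ((xx, k) : ℝ × ℝ)) x :=
      (continuous_id.prodMk continuous_const).continuousAt
    have h1 : ContinuousAt (fun xx : ℝ => N (xx, k)) x := Filter.Tendsto.comp hNcx hmcx
    exact h1.snd.continuousWithinAt
  have hsδ : s < s + δ := by linarith
  have hmemδ : s + δ ∈ Ioc s (s + δ) := ⟨hsδ, le_rfl⟩
  have hxbar := hcase (s + δ) hmemδ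
  rw [mem_Icc, not_and_or, not_le, not_le] at hxbar
  rcases hxbar with hlo | hhi'
  · -- bottom exit: Ψ (s+δ) < α₂
    have hall : ∀ x ∈ Ioc s (s + δ), Ψ x < α₂ := by
      intro x hx
      by_contra hle
      push_neg at hle
      have hxhi : β₂ < Ψ x := by
        have h'' := hcase x hx
        rw [mem_Icc, not_and_or, not_le, not_le] at h''
        rcases h'' with h' | h'
        · exact absurd h' (not_lt.mpr hle)
        · exact h'
      have hIVT := intermediate_value_Icc' hx.2 (hΨcont.mono (Icc_subset_Icc hx.1.le le_rfl))
      have hβ : α₂ ∈ Icc (Ψ (s + δ)) (Ψ x) := ⟨hlo.le, by linarith⟩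
      obtain ⟨x', hx', hΨx'⟩ := hIVT hβ
      exact absurd (by rw [hΨx']; exact ⟨le_rfl, h₂⟩)
        (hcase x' ⟨lt_of_lt_of_le hx.1 hx'.1, hx'.2⟩)
    have hysα : ys = α₂ := by
      refine le_antisymm ?_ hy1
      by_contra hlt
      push_neg at hlt
      have hev : ∀ᶠ x in 𝓝 s, α₂ < Ψ x := by
        have : ∀ᶠ u in 𝓝 (Ψ s), α₂ < u := by rw [hΨs]; exact eventually_gt_nhds hlt
        exact hΨc.eventually this
      obtain ⟨x, hx1, hx2⟩ := ((hev.filter_mono nhdsWithin_le_nhds).and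
        (Ioc_mem_nhdsGT_of_mem ⟨le_rfl, hsδ⟩)).exists
      exact absurd hx1 (not_lt.mpr (hall x hx2).le)
    have hgap : ∀ x ∈ Ioc s (s + δ), ∀ y' ∈ Icc α₂ β₂, k < (F (x, y')).2 := by
      intro x hx y' hy'
      have hΨx := hall x hx
      have hseg : ∀ yy ∈ Icc (Ψ x) y', ((x, yy) : ℝ × ℝ) ∈ V := by
        intro yy hyy
        rcases le_or_gt α₂ yy with hc | hc
        · exact hR ⟨⟨le_trans hs1 hx.1.le, le_trans (le_trans hx.2 hδw) hw⟩,
            ⟨hc, le_trans hyy.2 hy'.2⟩⟩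
        · apply hball (x, yy)
          · have : |x - s| ≤ δ := by
              rw [abs_le]; constructor <;> [linarith [hx.1.le]; linarith [hx.2]]
            simp only []; linarith [hδε]
          · have h1 : Ψ x ≤ yy := hyy.1
            have h2 : |Ψ x - ys| < ε := hΨnear x (Ioc_subset_Icc_self hx)
            rw [abs_le]
            rw [abs_lt] at h2
            constructor
            · simp only []; linarith [hysα]
            · simp only []; linarith [hysα]
      have hlt := col_lt h (lt_of_lt_of_le hΨx hy'.1) hseg
      rwa [hgΨ x (Ioc_subset_Icc_self hx)] at hlt
    -- re-entry point
    set X2 := {x ∈ Icc (s + δ) w | ∃ y' ∈ Icc α₂ β₂, (F (x, y')).2 = k} with hX2def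
    have hX2sub : Icc (s + δ) w ×ˢ Icc α₂ β₂ ⊆ V := by
      rintro ⟨px, py⟩ ⟨hpx, hpy⟩
      exact hR ⟨⟨le_trans hs1 (by linarith [hpx.1]), le_trans hpx.2 hw⟩, hpy⟩
    have hX2cpt : IsCompact X2 := isCompact_sol'
      (fun p hp => ((h.diff p (hX2sub hp)).continuousAt).continuousWithinAt) k
    have hX2ne : X2.Nonempty := ⟨w, ⟨⟨hδw, le_rfl⟩, hwit⟩⟩
    set d := sInf X2 with hddef
    have hdX2 : d ∈ X2 := hX2cpt.sInf_mem hX2ne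
    obtain ⟨⟨hd1, hd2⟩, yd, hyd, hgd⟩ := hdX2
    have hsd : s + δ < d := by
      rcases lt_or_eq_of_le hd1 with h' | h'
      · exact h'
      · exfalso
        rw [← h'] at hgd
        have := hgap (s + δ) hmemδ yd hyd
        rw [hgd] at this
        exact lt_irrefl _ this
    have hρcont : ContinuousOn (fun xx => ((F (xx, α₂)).2)) (Icc (s + δ) d) := by
      intro xx hxx
      have hv : ((xx, α₂) : ℝ × ℝ) ∈ V := hR ⟨⟨le_trans hs1 (by linarith [hxx.1]),
        le_trans (le_trans hxx.2 hd2) hw⟩, ⟨le_rfl, h₂⟩⟩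
      have hmcx : ContinuousAt (fun uu : ℝ => ((uu, α₂) : ℝ × ℝ)) xx :=
        (continuous_id.prodMk continuous_const).continuousAt
      have h1 : ContinuousAt (fun uu : ℝ => F (uu, α₂)) xx :=
        Filter.Tendsto.comp (h.diff _ hv).continuousAt hmcx
      exact h1.snd.continuousWithinAt
    have hgdα : k ≤ (F (d, α₂)).2 := by
      by_contra hgt
      push_neg at hgt
      have h0 : k < (F (s + δ, α₂)).2 := hgap (s + δ) hmemδ α₂ ⟨le_rfl, h₂⟩
      obtain ⟨x', hx', hgx'⟩ := intermediate_value_Ioo' hsd.le hρcont ⟨hgt, h0⟩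
      have hx'X2 : x' ∈ X2 := ⟨⟨hx'.1.le, le_trans hx'.2.le hd2⟩, α₂, ⟨le_rfl, h₂⟩, hgx'⟩
      have := csInf_le hX2cpt.bddBelow hx'X2
      rw [← hddef] at this
      linarith [hx'.2]
    have hydα : yd = α₂ := by
      by_contra hne
      have hlt' : α₂ < yd := lt_of_le_of_ne hyd.1 (Ne.symm hne)
      have hcol : (F (d, α₂)).2 < (F (d, yd)).2 := col_lt h hlt'
        (fun yy hyy => hR ⟨⟨le_trans hs1 (by linarith), le_trans hd2 hw⟩,
          ⟨hyy.1, le_trans hyy.2 hyd.2⟩⟩)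
      rw [hgd] at hcol
      linarith
    refine ⟨d, ⟨by linarith, hd2⟩, α₂, ⟨le_rfl, h₂⟩, by rw [← hydα]; exact hgd, ?_⟩
    have hrow := row_lt h (show s < d by linarith)
      (fun xx hxx => hR ⟨⟨le_trans hs1 hxx.1, le_trans (le_trans hxx.2 hd2) hw⟩, ⟨le_rfl, h₂⟩⟩)
    rw [hysα]
    exact hrow
  · -- top exit: Ψ (s+δ) > β₂
    have hall : ∀ x ∈ Ioc s (s + δ), β₂ < Ψ x := by
      intro x hx
      by_contra hle
      push_neg at hle
      have hxlo : Ψ x < α₂ := by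
        have h'' := hcase x hx
        rw [mem_Icc, not_and_or, not_le, not_le] at h''
        rcases h'' with h' | h'
        · exact h'
        · exact absurd h' (not_lt.mpr hle)
      have hIVT := intermediate_value_Icc hx.2 (hΨcont.mono (Icc_subset_Icc hx.1.le le_rfl))
      have hβ : β₂ ∈ Icc (Ψ x) (Ψ (s + δ)) := ⟨by linarith, hhi'.le⟩
      obtain ⟨x', hx', hΨx'⟩ := hIVT hβ
      exact absurd (by rw [hΨx']; exact ⟨h₂, le_rfl⟩)
        (hcase x' ⟨lt_of_lt_of_le hx.1 hx'.1, hx'.2⟩)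
    have hysβ : ys = β₂ := by
      refine le_antisymm hy2 ?_
      by_contra hlt
      push_neg at hlt
      have hev : ∀ᶠ x in 𝓝 s, Ψ x < β₂ := by
        have : ∀ᶠ u in 𝓝 (Ψ s), u < β₂ := by rw [hΨs]; exact eventually_lt_nhds hlt
        exact hΨc.eventually this
      obtain ⟨x, hx1, hx2⟩ := ((hev.filter_mono nhdsWithin_le_nhds).and
        (Ioc_mem_nhdsGT_of_mem ⟨le_rfl, hsδ⟩)).exists
      exact absurd hx1 (not_lt.mpr (hall x hx2).le)
    have hgap : ∀ x ∈ Ioc s (s + δ), ∀ y' ∈ Icc α₂ β₂, (F (x, y')).2 < k := by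
      intro x hx y' hy'
      have hΨx := hall x hx
      have hseg : ∀ yy ∈ Icc y' (Ψ x), ((x, yy) : ℝ × ℝ) ∈ V := by
        intro yy hyy
        rcases le_or_gt yy β₂ with hc | hc
        · exact hR ⟨⟨le_trans hs1 hx.1.le, le_trans (le_trans hx.2 hδw) hw⟩,
            ⟨le_trans hy'.1 hyy.1, hc⟩⟩
        · apply hball (x, yy)
          · have : |x - s| ≤ δ := by
              rw [abs_le]; constructor <;> [linarith [hx.1.le]; linarith [hx.2]]
            simp only []; linarith [hδε]
          · have h1 : yy ≤ Ψ x := hyy.2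
            have h2 : |Ψ x - ys| < ε := hΨnear x (Ioc_subset_Icc_self hx)
            rw [abs_le]
            rw [abs_lt] at h2
            constructor
            · simp only []; linarith [hysβ]
            · simp only []; linarith [hysβ]
      have hlt := col_lt h (lt_of_le_of_lt hy'.2 hΨx) hseg
      rwa [hgΨ x (Ioc_subset_Icc_self hx)] at hlt
    set X2 := {x ∈ Icc (s + δ) w | ∃ y' ∈ Icc α₂ β₂, (F (x, y')).2 = k} with hX2def
    have hX2sub : Icc (s + δ) w ×ˢ Icc α₂ β₂ ⊆ V := by
      rintro ⟨px, py⟩ ⟨hpx, hpy⟩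
      exact hR ⟨⟨le_trans hs1 (by linarith [hpx.1]), le_trans hpx.2 hw⟩, hpy⟩
    have hX2cpt : IsCompact X2 := isCompact_sol'
      (fun p hp => ((h.diff p (hX2sub hp)).continuousAt).continuousWithinAt) k
    have hX2ne : X2.Nonempty := ⟨w, ⟨⟨hδw, le_rfl⟩, hwit⟩⟩
    set d := sInf X2 with hddef
    have hdX2 : d ∈ X2 := hX2cpt.sInf_mem hX2ne
    obtain ⟨⟨hd1, hd2⟩, yd, hyd, hgd⟩ := hdX2
    have hsd : s + δ < d := by
      rcases lt_or_eq_of_le hd1 with h' | h'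
      · exact h'
      · exfalso
        rw [← h'] at hgd
        have := hgap (s + δ) hmemδ yd hyd
        rw [hgd] at this
        exact lt_irrefl _ this
    have hρcont : ContinuousOn (fun xx => ((F (xx, β₂)).2)) (Icc (s + δ) d) := by
      intro xx hxx
      have hv : ((xx, β₂) : ℝ × ℝ) ∈ V := hR ⟨⟨le_trans hs1 (by linarith [hxx.1]),
        le_trans (le_trans hxx.2 hd2) hw⟩, ⟨h₂, le_rfl⟩⟩
      have hmcx : ContinuousAt (fun uu : ℝ => ((uu, β₂) : ℝ × ℝ)) xx :=
        (continuous_id.prodMk continuous_const).continuousAt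
      have h1 : ContinuousAt (fun uu : ℝ => F (uu, β₂)) xx :=
        Filter.Tendsto.comp (h.diff _ hv).continuousAt hmcx
      exact h1.snd.continuousWithinAt
    have hgdβ : (F (d, β₂)).2 ≤ k := by
      by_contra hgt
      push_neg at hgt
      have h0 : (F (s + δ, β₂)).2 < k := hgap (s + δ) hmemδ β₂ ⟨h₂, le_rfl⟩
      obtain ⟨x', hx', hgx'⟩ := intermediate_value_Ioo hsd.le hρcont ⟨h0, hgt⟩
      have hx'X2 : x' ∈ X2 := ⟨⟨hx'.1.le, le_trans hx'.2.le hd2⟩, β₂, ⟨h₂, le_rfl⟩, hgx'⟩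
      have := csInf_le hX2cpt.bddBelow hx'X2
      rw [← hddef] at this
      linarith [hx'.2]
    have hydβ : yd = β₂ := by
      by_contra hne
      have hlt' : yd < β₂ := lt_of_le_of_ne hyd.2 hne
      have hcol : (F (d, yd)).2 < (F (d, β₂)).2 := col_lt h hlt'
        (fun yy hyy => hR ⟨⟨le_trans hs1 (by linarith), le_trans hd2 hw⟩,
          ⟨le_trans hyd.1 hyy.1, hyy.2⟩⟩)
      rw [hgd] at hcol
      linarith
    refine ⟨d, ⟨by linarith, hd2⟩, β₂, ⟨h₂, le_rfl⟩, by rw [← hydβ]; exact hgd, ?_⟩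
    have hrow := row_lt h (show s < d by linarith)
      (fun xx hxx => hR ⟨⟨le_trans hs1 hxx.1, le_trans (le_trans hxx.2 hd2) hw⟩, ⟨h₂, le_rfl⟩⟩)
    rw [hysβ]
    exact hrow


/-- Along the level set of `F₂`, `F₁` does not decrease from left to right. -/
lemma f_le (h : Good F V) {α₁ β₁ α₂ β₂ : ℝ}
    (hR : Icc α₁ β₁ ×ˢ Icc α₂ β₂ ⊆ V) (h₂ : α₂ ≤ β₂)
    {a b : ℝ × ℝ} (ha : a ∈ Icc α₁ β₁ ×ˢ Icc α₂ β₂) (hb : b ∈ Icc α₁ β₁ ×ˢ Icc α₂ β₂)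
    (hab : a.1 ≤ b.1) (hg : (F a).2 = (F b).2) : (F a).1 ≤ (F b).1 := by
  obtain ⟨⟨ha1, ha2⟩, ⟨ha3, ha4⟩⟩ := ha
  obtain ⟨⟨hb1, hb2⟩, ⟨hb3, hb4⟩⟩ := hb
  set k := (F a).2 with hk
  set c := (F a).1 with hc
  set E := {x ∈ Icc a.1 b.1 | ∃ y ∈ Icc α₂ β₂, (F (x, y)).2 = k ∧ c ≤ (F (x, y)).1} with hE
  have hEsub : Icc a.1 b.1 ×ˢ Icc α₂ β₂ ⊆ V := fun p hp =>
    hR ⟨⟨le_trans ha1 hp.1.1, le_trans hp.1.2 hb2⟩, hp.2⟩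
  have hEcpt : IsCompact E := isCompact_sol
    (fun p hp => ((h.diff p (hEsub hp)).continuousAt).continuousWithinAt) k c
  have haE : a.1 ∈ E := by
    refine ⟨⟨le_rfl, hab⟩, a.2, ⟨ha3, ha4⟩, ?_, ?_⟩
    · rw [Prod.mk.eta]
    · rw [Prod.mk.eta]
  have hEne : E.Nonempty := ⟨a.1, haE⟩
  have hsE : sSup E ∈ E := hEcpt.sSup_mem hEne
  obtain ⟨⟨hsa, hsb⟩, ys, hys, hgs, hfs⟩ := hsE
  rcases lt_or_eq_of_le hsb with hlt | heq
  · exfalso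
    obtain ⟨x, hx, y, hy, hgxy, hfxy⟩ := step h hR h₂ (le_trans ha1 hsa) hys.1 hys.2 hlt hb2
      ⟨b.2, ⟨hb3, hb4⟩, by rw [Prod.mk.eta, hgs]; exact hg.symm⟩
    have hxE : x ∈ E := ⟨⟨le_trans hsa hx.1.le, hx.2⟩, y, hy, hgxy.trans hgs,
      le_trans hfs hfxy.le⟩
    have hxle : x ≤ sSup E := le_csSup hEcpt.bddAbove hxE
    linarith [hx.1]
  · have hys' : ys = b.2 := by
      by_contra hne
      rcases lt_or_gt_of_ne hne with hlt' | hgt'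
      · have hcol := col_lt h (x := b.1) hlt'
          (fun yy hyy => hR ⟨⟨hb1, hb2⟩, ⟨le_trans hys.1 hyy.1, le_trans hyy.2 hb4⟩⟩)
        rw [heq] at hgs
        rw [Prod.mk.eta, hgs, ← hg] at hcol
        exact lt_irrefl _ hcol
      · have hcol := col_lt h (x := b.1) hgt'
          (fun yy hyy => hR ⟨⟨hb1, hb2⟩, ⟨le_trans hb3 hyy.1, le_trans hyy.2 hys.2⟩⟩)
        rw [heq] at hgs
        rw [Prod.mk.eta, hgs, ← hg] at hcol
        exact lt_irrefl _ hcol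
    rw [heq, hys', Prod.mk.eta] at hfs
    exact hfs

/-- Injectivity on the rectangle. -/
lemma injOn (h : Good F V) {α₁ β₁ α₂ β₂ : ℝ}
    (hR : Icc α₁ β₁ ×ˢ Icc α₂ β₂ ⊆ V) (h₂ : α₂ ≤ β₂) :
    InjOn F (Icc α₁ β₁ ×ˢ Icc α₂ β₂) := by
  have key : ∀ a b : ℝ × ℝ, a ∈ Icc α₁ β₁ ×ˢ Icc α₂ β₂ → b ∈ Icc α₁ β₁ ×ˢ Icc α₂ β₂ →
      F a = F b → a.1 < b.1 → False := by
    intro a b ha hb hFeq hlt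
    obtain ⟨⟨ha1, ha2⟩, ⟨ha3, ha4⟩⟩ := ha
    obtain ⟨⟨hb1, hb2⟩, ⟨hb3, hb4⟩⟩ := hb
    obtain ⟨x, hx, y, hy, hgxy, hfxy⟩ := step h hR h₂ ha1 ha3 ha4 hlt hb2
      ⟨b.2, ⟨hb3, hb4⟩, by rw [Prod.mk.eta, Prod.mk.eta, hFeq]⟩
    rw [Prod.mk.eta] at hgxy hfxy
    have hfle := f_le h hR h₂ (a := (x, y)) (b := b)
      ⟨⟨le_trans ha1 hx.1.le, le_trans hx.2 hb2⟩, hy⟩ ⟨⟨hb1, hb2⟩, ⟨hb3, hb4⟩⟩ hx.2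
      (by rw [hgxy, hFeq])
    rw [hFeq] at hfxy
    linarith
  intro a ha b hb hFeq
  rcases lt_trichotomy a.1 b.1 with h1 | h1 | h1
  · exact (key a b ha hb hFeq h1).elim
  · have h2' : a.2 = b.2 := by
      by_contra hne
      rcases lt_or_gt_of_ne hne with hlt | hgt
      · have hcol := col_lt h (x := a.1) hlt
          (fun yy hyy => hR ⟨ha.1, ⟨le_trans ha.2.1 hyy.1, le_trans hyy.2 hb.2.2⟩⟩)
        rw [Prod.mk.eta, h1, Prod.mk.eta, hFeq] at hcol
        exact lt_irrefl _ hcol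
      · have hcol := col_lt h (x := a.1) hgt
          (fun yy hyy => hR ⟨ha.1, ⟨le_trans hb.2.1 hyy.1, le_trans hyy.2 ha.2.2⟩⟩)
        rw [Prod.mk.eta, h1, Prod.mk.eta, hFeq] at hcol
        exact lt_irrefl _ hcol
    exact Prod.ext_iff.mpr ⟨h1, h2'⟩
  · exact (key b a hb ha hFeq.symm h1).elim

end GN

/-- Gale–Nikaidô univalence criterion in the plane: let
`R = [α₁, β₁] × [α₂, β₂] ⊂ ℝ²` and let `F = (F₁, F₂) : ℝ² → ℝ²` be continuously
differentiable on an open set containing `R`.  If at every point `x ∈ R` the Jacobian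
matrix is a P-matrix, i.e. `∂F₁/∂x₁(x) > 0`, `∂F₂/∂x₂(x) > 0` and `det DF(x) > 0`,
then `F` is injective on `R`. -/
theorem stmt_14 (α₁ β₁ α₂ β₂ : ℝ) (h₁ : α₁ ≤ β₁) (h₂ : α₂ ≤ β₂)
    (F : ℝ × ℝ → ℝ × ℝ) (U : Set (ℝ × ℝ)) (hU : IsOpen U)
    (hRU : Set.Icc α₁ β₁ ×ˢ Set.Icc α₂ β₂ ⊆ U)
    (hF : ContDiffOn ℝ 1 F U)
    (hP : ∀ x ∈ Set.Icc α₁ β₁ ×ˢ Set.Icc α₂ β₂,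
      0 < deriv (fun t => (F (t, x.2)).1) x.1 ∧
      0 < deriv (fun t => (F (x.1, t)).2) x.2 ∧
      0 < deriv (fun t => (F (t, x.2)).1) x.1 * deriv (fun t => (F (x.1, t)).2) x.2 -
          deriv (fun t => (F (x.1, t)).1) x.2 * deriv (fun t => (F (t, x.2)).2) x.1) :
    Set.InjOn F (Set.Icc α₁ β₁ ×ˢ Set.Icc α₂ β₂) := by
  classical
  have hfd : ContinuousOn (fderiv ℝ F) U := hF.continuousOn_fderiv_of_isOpen hU le_rfl
  set V := {z ∈ U | 0 < (fderiv ℝ F z (1, 0)).1 ∧ 0 < (fderiv ℝ F z (0, 1)).2 ∧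
    0 < (fderiv ℝ F z (1, 0)).1 * (fderiv ℝ F z (0, 1)).2 -
        (fderiv ℝ F z (0, 1)).1 * (fderiv ℝ F z (1, 0)).2} with hVdef
  have h10 : ContinuousOn (fun z => (fderiv ℝ F z) (1, 0)) U := hfd.clm_apply continuousOn_const
  have h01 : ContinuousOn (fun z => (fderiv ℝ F z) (0, 1)) U := hfd.clm_apply continuousOn_const
  have hmap : ContinuousOn (fun z => (((fderiv ℝ F z) (1, 0)).1, ((fderiv ℝ F z) (0, 1)).2,
      ((fderiv ℝ F z) (1, 0)).1 * ((fderiv ℝ F z) (0, 1)).2 -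
      ((fderiv ℝ F z) (0, 1)).1 * ((fderiv ℝ F z) (1, 0)).2)) U :=
    (h10.fst).prodMk ((h01.snd).prodMk (((h10.fst).mul (h01.snd)).sub ((h01.fst).mul (h10.snd))))
  have hVeq : V = U ∩ (fun z => (((fderiv ℝ F z) (1, 0)).1, ((fderiv ℝ F z) (0, 1)).2,
      ((fderiv ℝ F z) (1, 0)).1 * ((fderiv ℝ F z) (0, 1)).2 -
      ((fderiv ℝ F z) (0, 1)).1 * ((fderiv ℝ F z) (1, 0)).2)) ⁻¹'
      (Set.Ioi 0 ×ˢ Set.Ioi 0 ×ˢ Set.Ioi (0 : ℝ)) := by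
    ext z
    simp only [hVdef, Set.mem_setOf_eq, Set.mem_inter_iff, Set.mem_preimage, Set.mem_prod,
      Set.mem_Ioi]
  have hVopen : IsOpen V := by
    rw [hVeq]
    exact hmap.isOpen_inter_preimage hU
      (isOpen_Ioi.prod (isOpen_Ioi.prod isOpen_Ioi))
  have hRV : Set.Icc α₁ β₁ ×ˢ Set.Icc α₂ β₂ ⊆ V := by
    intro z hz
    have hzU := hRU hz
    have hdz : DifferentiableAt ℝ F z :=
      (hF.contDiffAt (hU.mem_nhds hzU)).differentiableAt one_ne_zero
    obtain ⟨hp1, hp2, hp3⟩ := hP z hz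
    rw [(GN.hasDerivAt_row1 hdz).deriv] at hp1 hp3
    rw [(GN.hasDerivAt_col2 hdz).deriv] at hp2 hp3
    rw [(GN.hasDerivAt_col1 hdz).deriv] at hp3
    rw [(GN.hasDerivAt_row2 hdz).deriv] at hp3
    exact ⟨hzU, hp1, hp2, hp3⟩
  have hgood : GN.Good F V :=
    ⟨hVopen, fun z hz => hF.contDiffAt (hU.mem_nhds hz.1),
      fun z hz => hz.2.1, fun z hz => hz.2.2.1, fun z hz => hz.2.2.2⟩
  exact GN.injOn hgood hRV h₂
end
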